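/- Let X and Y be d×d real positive semidefinite matrices and L ≥ 1 an integer. Then ‖X^{1/L} - Y^{1/L}‖_F ≤ d^{(L-1)/(2L)} · ‖X - Y‖_F^{1/L}, where X^{1/L} denotes the unique positive semidefinite L-th root. -/

import Mathlib

open Matrix

/-- The Frobenius norm of a real matrix. -/
noncomputable def frobNorm {m n : Type*} [Fintype m] [Fintype n] (A : Matrix m n ℝ) : ℝ :=
  Real.sqrt (∑ i, ∑ j, (A i j) ^ 2)

namespace PsdRootAux

noncomputable def f2 {d : ℕ} (A : Matrix (Fin d) (Fin d) ℝ) : ℝ :=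
  ∑ i, ∑ j, (A i j) ^ 2

lemma f2_nonneg {d : ℕ} (A : Matrix (Fin d) (Fin d) ℝ) : 0 ≤ f2 A := by
  refine Finset.sum_nonneg fun i _ => Finset.sum_nonneg fun j _ => sq_nonneg _

lemma f2_eq_trace {d : ℕ} (A : Matrix (Fin d) (Fin d) ℝ) :
    f2 A = Matrix.trace (Aᵀ * A) := by
  simp only [f2, Matrix.trace, Matrix.diag, Matrix.mul_apply, Matrix.transpose_apply, sq]
  exact Finset.sum_comm

lemma f2_conj {d : ℕ} (U V M : Matrix (Fin d) (Fin d) ℝ)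
    (hU : U * Uᵀ = 1) (hV : V * Vᵀ = 1) :
    f2 (Uᵀ * M * V) = f2 M := by
  rw [f2_eq_trace, f2_eq_trace]
  have h1 : (Uᵀ * M * V)ᵀ * (Uᵀ * M * V) = Vᵀ * (Mᵀ * M) * V := by
    have h0 : (Uᵀ * M * V)ᵀ = Vᵀ * (Mᵀ * U) := by
      simp [Matrix.transpose_mul, Matrix.mul_assoc]
    rw [h0]
    calc Vᵀ * (Mᵀ * U) * (Uᵀ * M * V)
        = Vᵀ * (Mᵀ * (U * Uᵀ) * M * V) := by
          simp only [Matrix.mul_assoc]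
      _ = Vᵀ * (Mᵀ * M) * V := by rw [hU]; simp only [Matrix.mul_one, Matrix.mul_assoc]
  rw [h1, Matrix.trace_mul_cycle, ← Matrix.mul_assoc, hV, Matrix.one_mul]

lemma f2_prod {d : ℕ} (A : Matrix (Fin d) (Fin d) ℝ) :
    f2 A = ∑ p : Fin d × Fin d, (A p.1 p.2) ^ 2 :=
  (Fintype.sum_prod_type (f := fun p : Fin d × Fin d => (A p.1 p.2) ^ 2)).symm

lemma scalar_root {L : ℕ} (hL : L ≠ 0) {a b : ℝ} (ha : 0 ≤ a) (hb : 0 ≤ b) :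
    |a - b| ^ L ≤ |a ^ L - b ^ L| := by
  wlog hba : b ≤ a generalizing a b
  · rw [abs_sub_comm, abs_sub_comm (a ^ L)]
    exact this hb ha (le_of_not_ge hba)
  have h1 : b ^ L ≤ a ^ L := pow_le_pow_left₀ hb hba L
  rw [abs_of_nonneg (sub_nonneg.2 hba), abs_of_nonneg (sub_nonneg.2 h1)]
  have := pow_add_pow_le (x := a - b) (y := b) (sub_nonneg.2 hba) hb hL
  rw [sub_add_cancel] at this
  linarith

end PsdRootAux

open PsdRootAux in
/-- Wihler's bound: for `d × d` real positive semidefinite matrices `X, Y` and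
`L ≥ 1`, the unique positive semidefinite `L`-th roots (here `R` and `S`, characterized by
being PSD with `R^L = X`, `S^L = Y`) satisfy
`‖X^{1/L} - Y^{1/L}‖_F ≤ d^{(L-1)/(2L)} ‖X - Y‖_F^{1/L}`. -/
theorem psd_root_holder_bound {d : ℕ} (L : ℕ) (hL : 1 ≤ L)
    (X Y R S : Matrix (Fin d) (Fin d) ℝ)
    (hX : X.PosSemidef) (hY : Y.PosSemidef)
    (hR : R.PosSemidef) (hRX : R ^ L = X)
    (hS : S.PosSemidef) (hSY : S ^ L = Y) :
    frobNorm (R - S) ≤ (d : ℝ) ^ (((L : ℝ) - 1) / (2 * L)) * frobNorm (X - Y) ^ ((1 : ℝ) / L) := by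
  have hLR : (1 : ℝ) ≤ (L : ℝ) := by exact_mod_cast hL
  have hL0 : (L : ℝ) ≠ 0 := by positivity
  have hfrnn : ∀ (M : Matrix (Fin d) (Fin d) ℝ), frobNorm M = Real.sqrt (f2 M) := fun _ => rfl
  rcases Nat.eq_zero_or_pos d with hd | hd
  · subst hd
    have hz : f2 (R - S) = 0 := by simp [f2]
    rw [hfrnn, hz, Real.sqrt_zero]
    have h1 : (0:ℝ) ≤ frobNorm (X - Y) := Real.sqrt_nonneg _
    positivity
  have hdR : (0 : ℝ) < d := by exact_mod_cast hd
  -- spectral setup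
  have hRh : R.IsHermitian := hR.1
  have hSh : S.IsHermitian := hS.1
  set U : Matrix (Fin d) (Fin d) ℝ := (hRh.eigenvectorUnitary : Matrix (Fin d) (Fin d) ℝ) with hUdef
  set V : Matrix (Fin d) (Fin d) ℝ := (hSh.eigenvectorUnitary : Matrix (Fin d) (Fin d) ℝ) with hVdef
  set r : Fin d → ℝ := hRh.eigenvalues with hrdef
  set s : Fin d → ℝ := hSh.eigenvalues with hsdef
  have hr : ∀ i, 0 ≤ r i := fun i => hR.eigenvalues_nonneg i
  have hs : ∀ i, 0 ≤ s i := fun i => hS.eigenvalues_nonneg i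
  have hstar : ∀ (M : Matrix (Fin d) (Fin d) ℝ), star M = Mᵀ := fun M => by
    ext i j; simp [Matrix.star_apply]
  have hU1 : Uᵀ * U = 1 := by
    rw [← hstar]; exact Unitary.star_mul_self_of_mem hRh.eigenvectorUnitary.2
  have hU2 : U * Uᵀ = 1 := by
    rw [← hstar]; exact Unitary.mul_star_self_of_mem hRh.eigenvectorUnitary.2
  have hV1 : Vᵀ * V = 1 := by
    rw [← hstar]; exact Unitary.star_mul_self_of_mem hSh.eigenvectorUnitary.2
  have hV2 : V * Vᵀ = 1 := by
    rw [← hstar]; exact Unitary.mul_star_self_of_mem hSh.eigenvectorUnitary.2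
  have hRspec : R = U * Matrix.diagonal r * Uᵀ := by
    have := hRh.spectral_theorem
    rw [Unitary.conjStarAlgAut_apply, hstar] at this
    simpa using this
  have hSspec : S = V * Matrix.diagonal s * Vᵀ := by
    have := hSh.spectral_theorem
    rw [Unitary.conjStarAlgAut_apply, hstar] at this
    simpa using this
  have key1 : Uᵀ * R = Matrix.diagonal r * Uᵀ := by
    rw [hRspec, ← Matrix.mul_assoc, ← Matrix.mul_assoc, hU1, Matrix.one_mul]
  have key2 : S * V = V * Matrix.diagonal s := by
    rw [hSspec, Matrix.mul_assoc, hV1, Matrix.mul_one]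
  have pow1 : ∀ k : ℕ, Uᵀ * R ^ k = (Matrix.diagonal r) ^ k * Uᵀ := by
    intro k
    induction k with
    | zero => simp
    | succ k ih =>
        rw [pow_succ', pow_succ', ← Matrix.mul_assoc, key1, Matrix.mul_assoc, ih,
          ← Matrix.mul_assoc]
  have pow2 : ∀ k : ℕ, S ^ k * V = V * (Matrix.diagonal s) ^ k := by
    intro k
    induction k with
    | zero => simp
    | succ k ih =>
        rw [pow_succ, pow_succ, Matrix.mul_assoc, key2, ← Matrix.mul_assoc, ih,
          Matrix.mul_assoc]
  set G : Matrix (Fin d) (Fin d) ℝ := Uᵀ * V with hGdef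
  -- entry computations
  have entry : ∀ (a b : Fin d → ℝ) (i j : Fin d),
      (Matrix.diagonal a * G - G * Matrix.diagonal b) i j = (a i - b j) * G i j := by
    intro a b i j
    simp [Matrix.sub_apply, Matrix.diagonal_mul, Matrix.mul_diagonal, sub_mul, mul_comm]
  have conj1 : Uᵀ * (R - S) * V = Matrix.diagonal r * G - G * Matrix.diagonal s := by
    rw [Matrix.mul_sub, Matrix.sub_mul, key1, Matrix.mul_assoc (Matrix.diagonal r) Uᵀ V,
      Matrix.mul_assoc Uᵀ S V, key2, ← Matrix.mul_assoc Uᵀ V (Matrix.diagonal s), ← hGdef]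
  have conj2 : Uᵀ * (X - Y) * V
      = Matrix.diagonal (fun i => r i ^ L) * G - G * Matrix.diagonal (fun j => s j ^ L) := by
    rw [← hRX, ← hSY, Matrix.mul_sub, Matrix.sub_mul, pow1 L,
      Matrix.mul_assoc ((Matrix.diagonal r) ^ L) Uᵀ V,
      Matrix.mul_assoc Uᵀ (S ^ L) V, pow2 L, ← Matrix.mul_assoc Uᵀ V ((Matrix.diagonal s) ^ L),
      ← hGdef, Matrix.diagonal_pow, Matrix.diagonal_pow]
    rfl
  have hA : f2 (R - S) = ∑ p : Fin d × Fin d, (r p.1 - s p.2) ^ 2 * (G p.1 p.2) ^ 2 := by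
    rw [← f2_conj U V (R - S) hU2 hV2, conj1, f2_prod]
    refine Finset.sum_congr rfl fun p _ => ?_
    rw [entry r s p.1 p.2, mul_pow]
  have hB : f2 (X - Y) = ∑ p : Fin d × Fin d, (r p.1 ^ L - s p.2 ^ L) ^ 2 * (G p.1 p.2) ^ 2 := by
    rw [← f2_conj U V (X - Y) hU2 hV2, conj2, f2_prod]
    refine Finset.sum_congr rfl fun p _ => ?_
    rw [entry (fun i => r i ^ L) (fun j => s j ^ L) p.1 p.2, mul_pow]
  have hW : ∑ p : Fin d × Fin d, (G p.1 p.2) ^ 2 = (d : ℝ) := by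
    have h2 : f2 G = f2 (1 : Matrix (Fin d) (Fin d) ℝ) := by
      have h3 := f2_conj U V 1 hU2 hV2
      rw [Matrix.mul_one] at h3
      rw [hGdef]; exact h3
    have h4 : f2 (1 : Matrix (Fin d) (Fin d) ℝ) = (d : ℝ) := by
      simp only [f2]
      have h5 : ∀ i : Fin d, (∑ j, ((1 : Matrix (Fin d) (Fin d) ℝ) i j) ^ 2) = 1 := by
        intro i
        rw [Finset.sum_eq_single i]
        · simp [Matrix.one_apply]
        · intro j _ hj; simp [Matrix.one_apply, Ne.symm hj]
        · intro h; exact absurd (Finset.mem_univ i) h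
      simp [h5]
    rw [← f2_prod, h2, h4]
  have hBnn : 0 ≤ f2 (X - Y) := f2_nonneg _
  -- pointwise scalar inequality
  have hptw : ∀ p : Fin d × Fin d,
      (r p.1 - s p.2) ^ 2 ≤ ((r p.1 ^ L - s p.2 ^ L) ^ 2) ^ ((1 : ℝ) / L) := by
    intro p
    have h1 : |r p.1 - s p.2| ^ L ≤ |r p.1 ^ L - s p.2 ^ L| :=
      scalar_root (by omega) (hr p.1) (hs p.2)
    have h2 : ((r p.1 - s p.2) ^ 2) ^ L ≤ (r p.1 ^ L - s p.2 ^ L) ^ 2 := by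
      calc ((r p.1 - s p.2) ^ 2) ^ L = (|r p.1 - s p.2| ^ L) ^ 2 := by
            rw [← sq_abs]; ring
        _ ≤ |r p.1 ^ L - s p.2 ^ L| ^ 2 := by
            apply pow_le_pow_left₀ (by positivity) h1
        _ = (r p.1 ^ L - s p.2 ^ L) ^ 2 := sq_abs _
    have h3 : (((r p.1 - s p.2) ^ 2) ^ L : ℝ) ^ ((1:ℝ)/L)
        ≤ ((r p.1 ^ L - s p.2 ^ L) ^ 2) ^ ((1:ℝ)/L) :=
      Real.rpow_le_rpow (by positivity) h2 (by positivity)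
    calc (r p.1 - s p.2) ^ 2
        = (((r p.1 - s p.2) ^ 2) ^ L : ℝ) ^ ((1:ℝ)/L) := by
          rw [← Real.rpow_natCast ((r p.1 - s p.2)^2) L, ← Real.rpow_mul (sq_nonneg _),
            mul_one_div, div_self hL0, Real.rpow_one]
      _ ≤ ((r p.1 ^ L - s p.2 ^ L) ^ 2) ^ ((1:ℝ)/L) := h3
  -- Jensen step
  have key : f2 (R - S) ≤ (d : ℝ) ^ (1 - (1:ℝ)/L) * (f2 (X - Y)) ^ ((1:ℝ)/L) := by
    have step1 : f2 (R - S)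
        ≤ ∑ p : Fin d × Fin d, ((r p.1 ^ L - s p.2 ^ L) ^ 2) ^ ((1:ℝ)/L) * (G p.1 p.2) ^ 2 := by
      rw [hA]
      exact Finset.sum_le_sum fun p _ =>
        mul_le_mul_of_nonneg_right (hptw p) (sq_nonneg _)
    have jensen := Real.arith_mean_le_rpow_mean (Finset.univ (α := Fin d × Fin d))
      (fun p => (G p.1 p.2) ^ 2 / d)
      (fun p => ((r p.1 ^ L - s p.2 ^ L) ^ 2) ^ ((1:ℝ)/L))
      (fun p _ => by positivity)
      (by rw [← Finset.sum_div, hW, div_self (ne_of_gt hdR)])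
      (fun p _ => Real.rpow_nonneg (sq_nonneg _) _) hLR
    have hz2 : ∀ p : Fin d × Fin d,
        (((r p.1 ^ L - s p.2 ^ L) ^ 2) ^ ((1:ℝ)/L)) ^ (L:ℝ) = (r p.1 ^ L - s p.2 ^ L) ^ 2 := by
      intro p
      rw [← Real.rpow_mul (sq_nonneg _), one_div_mul_cancel hL0, Real.rpow_one]
    simp only [hz2] at jensen
    -- jensen : ∑ p, (G²/d) * t^{1/L} ≤ (∑ p, (G²/d) * t) ^ (1/L)
    have hsum1 : ∑ p : Fin d × Fin d, (G p.1 p.2) ^ 2 / d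
          * ((r p.1 ^ L - s p.2 ^ L) ^ 2) ^ ((1:ℝ)/L)
        = (∑ p : Fin d × Fin d, ((r p.1 ^ L - s p.2 ^ L) ^ 2) ^ ((1:ℝ)/L) * (G p.1 p.2) ^ 2)
          / d := by
      rw [Finset.sum_div]
      exact Finset.sum_congr rfl fun p _ => by ring
    have hsum2 : ∑ p : Fin d × Fin d, (G p.1 p.2) ^ 2 / d * ((r p.1 ^ L - s p.2 ^ L) ^ 2)
        = f2 (X - Y) / d := by
      rw [hB, Finset.sum_div]
      exact Finset.sum_congr rfl fun p _ => by ring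
    rw [hsum1, hsum2] at jensen
    have jensen2 : ∑ p : Fin d × Fin d,
          ((r p.1 ^ L - s p.2 ^ L) ^ 2) ^ ((1:ℝ)/L) * (G p.1 p.2) ^ 2
        ≤ (d:ℝ) * (f2 (X - Y) / d) ^ ((1:ℝ)/L) := by
      have h6 := mul_le_mul_of_nonneg_left jensen (le_of_lt hdR)
      rw [mul_div_cancel₀ _ (ne_of_gt hdR)] at h6
      exact h6
    refine le_trans (le_trans step1 jensen2) (le_of_eq ?_)
    rw [Real.div_rpow hBnn (le_of_lt hdR), Real.rpow_sub hdR, Real.rpow_one]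
    field_simp
  -- final assembly
  rw [hfrnn, hfrnn]
  have h1 : Real.sqrt (f2 (R - S))
      ≤ Real.sqrt ((d : ℝ) ^ (1 - (1:ℝ)/L) * (f2 (X - Y)) ^ ((1:ℝ)/L)) :=
    Real.sqrt_le_sqrt key
  refine le_trans h1 (le_of_eq ?_)
  rw [Real.sqrt_eq_rpow, Real.sqrt_eq_rpow,
    Real.mul_rpow (Real.rpow_nonneg (le_of_lt hdR) _) (Real.rpow_nonneg hBnn _),
    ← Real.rpow_mul (le_of_lt hdR), ← Real.rpow_mul hBnn, ← Real.rpow_mul hBnn]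
  congr 1
  · congr 1
    rw [one_sub_div hL0, div_mul_div_comm, mul_one, mul_comm (L:ℝ) 2]
  · congr 1
    ring
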